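/- Let A ∈ ℂ^{m×N} have unit-norm columns and mutual coherence μ(A) < 1/(2s−1) for some s ≥ 1. Then A is injective on s-sparse vectors: if c, c' ∈ ℂ^N each have at most s nonzero entries and Ac = Ac', then c = c'. -/

import Mathlib

open Finset

theorem coherence_implies_sparse_injective (m N s : ℕ) (hs : 1 ≤ s)
    (A : Matrix (Fin m) (Fin N) ℂ)
    (hnorm : ∀ j, ∑ i, ‖A i j‖ ^ 2 = 1)
    (hμ : ∀ k j : Fin N, k ≠ j →
      ‖∑ i, star (A i k) * A i j‖ < 1 / (2 * (s : ℝ) - 1)) :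
    ∀ c c' : Fin N → ℂ,
      ({j | c j ≠ 0} : Set (Fin N)).toFinset.card ≤ s →
      ({j | c' j ≠ 0} : Set (Fin N)).toFinset.card ≤ s →
      A.mulVec c = A.mulVec c' → c = c' := by
  intro c c' hc hc' hA
  by_contra hne
  set d : Fin N → ℂ := fun j => c j - c' j with hd
  have hdne : ∃ j, d j ≠ 0 := by
    by_contra h
    push_neg at h
    exact hne (funext fun j => sub_eq_zero.mp (h j))
  obtain ⟨j0, hj0⟩ := hdne
  set T : Finset (Fin N) :=
    ({j | c j ≠ 0} : Set (Fin N)).toFinset ∪ ({j | c' j ≠ 0} : Set (Fin N)).toFinset with hT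
  have hdT : ∀ k, k ∉ T → d k = 0 := by
    intro k hk
    simp only [hT, Finset.mem_union, Set.mem_toFinset, Set.mem_setOf_eq, not_or, not_not] at hk
    simp [hd, hk.1, hk.2]
  have hj0T : j0 ∈ T := by
    by_contra h
    exact hj0 (hdT j0 h)
  have hTcard : T.card ≤ 2 * s := by
    calc T.card ≤ _ + _ := Finset.card_union_le _ _
    _ ≤ 2 * s := by omega
  obtain ⟨b, hbT, hbmax⟩ := T.exists_max_image (fun k => ‖d k‖) ⟨j0, hj0T⟩
  have hdb : 0 < ‖d b‖ :=
    lt_of_lt_of_le (by simpa using hj0) (hbmax j0 hj0T)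
  have hAd : ∀ i, ∑ k, A i k * d k = 0 := by
    intro i
    have h1 := congrFun hA i
    simp only [Matrix.mulVec, dotProduct] at h1
    simp only [hd, mul_sub, Finset.sum_sub_distrib]
    rw [sub_eq_zero]
    exact h1
  have key : ∑ k, (∑ i, (starRingEnd ℂ) (A i b) * A i k) * d k = 0 := by
    calc ∑ k, (∑ i, (starRingEnd ℂ) (A i b) * A i k) * d k
        = ∑ i, (starRingEnd ℂ) (A i b) * ∑ k, A i k * d k := by
          simp only [Finset.sum_mul, Finset.mul_sum, mul_assoc]
          try exact Finset.sum_comm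
      _ = 0 := by simp [hAd]
  have hGbb : ∑ i, (starRingEnd ℂ) (A i b) * A i b = 1 := by
    have h1 : ∀ i, (starRingEnd ℂ) (A i b) * A i b = ((‖A i b‖ ^ 2 : ℝ) : ℂ) := by
      intro i
      rw [mul_comm, Complex.mul_conj, Complex.normSq_eq_norm_sq]
    rw [Finset.sum_congr rfl fun i _ => h1 i, ← Complex.ofReal_sum, hnorm b]
    simp
  -- restrict sum to T, split off b
  have keyT : ∑ k ∈ T, (∑ i, (starRingEnd ℂ) (A i b) * A i k) * d k = 0 := by
    rw [← key]
    apply Finset.sum_subset (Finset.subset_univ T)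
    intro k _ hk
    rw [hdT k hk, mul_zero]
  have hsplit : d b = -∑ k ∈ T.erase b, (∑ i, (starRingEnd ℂ) (A i b) * A i k) * d k := by
    have := Finset.add_sum_erase T
      (fun k => (∑ i, (starRingEnd ℂ) (A i b) * A i k) * d k) hbT
    rw [keyT] at this
    have h2 : (∑ i, (starRingEnd ℂ) (A i b) * A i b) * d b
        + ∑ k ∈ T.erase b, (∑ i, (starRingEnd ℂ) (A i b) * A i k) * d k = 0 := this
    rw [hGbb, one_mul] at h2
    linear_combination h2
  have habs : ‖d b‖
      ≤ ∑ k ∈ T.erase b, ‖∑ i, (starRingEnd ℂ) (A i b) * A i k‖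
          * ‖d k‖ := by
    rw [hsplit, norm_neg]
    calc ‖∑ k ∈ T.erase b, (∑ i, (starRingEnd ℂ) (A i b) * A i k) * d k‖
        ≤ ∑ k ∈ T.erase b, ‖(∑ i, (starRingEnd ℂ) (A i b) * A i k) * d k‖ :=
          norm_sum_le _ _
      _ = _ := by simp [map_mul]
  have hμpos : (0:ℝ) < 1 / (2 * (s : ℝ) - 1) := by
    apply div_pos one_pos
    have : (1:ℝ) ≤ (s:ℝ) := by exact_mod_cast hs
    linarith
  rcases Finset.eq_empty_or_nonempty (T.erase b) with he | hne'
  · rw [he] at habs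
    simp at habs
    exact absurd (norm_eq_zero.mpr habs).le (not_le.mpr hdb)
  · have hstrict : ∑ k ∈ T.erase b, ‖∑ i, (starRingEnd ℂ) (A i b) * A i k‖
        * ‖d k‖
        < ∑ _k ∈ T.erase b, 1 / (2 * (s : ℝ) - 1) * ‖d b‖ := by
      apply Finset.sum_lt_sum_of_nonempty hne'
      intro k hk
      have hkb : b ≠ k := fun h => (Finset.ne_of_mem_erase hk) h.symm
      calc ‖∑ i, (starRingEnd ℂ) (A i b) * A i k‖ * ‖d k‖
          ≤ ‖∑ i, (starRingEnd ℂ) (A i b) * A i k‖ * ‖d b‖ :=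
            mul_le_mul_of_nonneg_left (hbmax k (Finset.mem_of_mem_erase hk))
              (norm_nonneg _)
        _ < 1 / (2 * (s : ℝ) - 1) * ‖d b‖ := by
            apply mul_lt_mul_of_pos_right _ hdb
            exact hμ b k hkb
    have hcard : ((T.erase b).card : ℝ) ≤ 2 * (s : ℝ) - 1 := by
      have h1 : (T.erase b).card = T.card - 1 := Finset.card_erase_of_mem hbT
      have h2 : (T.erase b).card ≤ 2 * s - 1 := by omega
      have h3 : ((T.erase b).card : ℝ) ≤ ((2 * s - 1 : ℕ) : ℝ) := by exact_mod_cast h2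
      have h4 : ((2 * s - 1 : ℕ) : ℝ) = 2 * (s : ℝ) - 1 := by
        have : 1 ≤ 2 * s := by omega
        push_cast [this]
        ring
      linarith [h3, h4.le]
    have hsum_const : ∑ _k ∈ T.erase b, 1 / (2 * (s : ℝ) - 1) * ‖d b‖
        ≤ ‖d b‖ := by
      rw [Finset.sum_const, nsmul_eq_mul]
      have hne0 : 2 * (s : ℝ) - 1 ≠ 0 := by
        have : (1:ℝ) ≤ (s:ℝ) := by exact_mod_cast hs
        intro h; linarith
      calc ((T.erase b).card : ℝ) * (1 / (2 * (s : ℝ) - 1) * ‖d b‖)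
          ≤ (2 * (s : ℝ) - 1) * (1 / (2 * (s : ℝ) - 1) * ‖d b‖) := by
            apply mul_le_mul_of_nonneg_right hcard
            positivity
        _ = ‖d b‖ := by
            field_simp
    linarith [habs, hstrict, hsum_const]
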